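/- Let A and C be n×n Hermitian complex matrices, and suppose all n eigenvalues of A are simple (pairwise distinct). For each k ≤ n, let P_k(A) denote the orthogonal projection onto the subspace spanned by the eigenvectors of A corresponding to its k largest eigenvalues. Then the function t ↦ Σ_{j=1}^k λ_j↓(A + tC) is differentiable at t = 0 with derivative equal to Tr[P_k(A) C]. Equivalently, if U is the unitary with U A U* = diag(λ_1↓(A), ..., λ_n↓(A)), the derivative equals Σ_{j=1}^k (U C U*)_{jj}. -/

import Mathlib

open Matrix
open scoped ComplexOrder

/-- The eigenvalues of a square matrix, sorted in non-increasing order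
(junk value `0` if the matrix is not Hermitian). -/
noncomputable def eigValsDown {𝕜 : Type*} [RCLike 𝕜] {n : ℕ}
    (A : Matrix (Fin n) (Fin n) 𝕜) : Fin n → ℝ :=
  if hA : A.IsHermitian then
    fun k => (hA.eigenvalues ∘ Tuple.sort hA.eigenvalues) k.rev
  else 0

/-- Functional calculus: apply a real function to a Hermitian matrix via its spectral
decomposition (junk value `0` if the matrix is not Hermitian). -/
noncomputable def matFun {𝕜 : Type*} [RCLike 𝕜] {n : ℕ} (h : ℝ → ℝ)
    (A : Matrix (Fin n) (Fin n) 𝕜) : Matrix (Fin n) (Fin n) 𝕜 :=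
  if hA : A.IsHermitian then
    (hA.eigenvectorUnitary : Matrix (Fin n) (Fin n) 𝕜) *
      Matrix.diagonal (fun i => (h (hA.eigenvalues i) : 𝕜)) *
      star (hA.eigenvectorUnitary : Matrix (Fin n) (Fin n) 𝕜)
  else 0

/-- The operator norm (largest singular value) of a matrix. -/
noncomputable def opNorm {𝕜 : Type*} [RCLike 𝕜] {n : ℕ}
    (A : Matrix (Fin n) (Fin n) 𝕜) : ℝ :=
  ‖Matrix.toEuclideanCLM (𝕜 := 𝕜) A‖

/-- The matrix absolute value `|M| = (Mᴴ M)^(1/2)`. -/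
noncomputable def matAbs {𝕜 : Type*} [RCLike 𝕜] {n : ℕ}
    (A : Matrix (Fin n) (Fin n) 𝕜) : Matrix (Fin n) (Fin n) 𝕜 :=
  ((Matrix.posSemidef_conjTranspose_mul_self A).1.eigenvectorUnitary : Matrix (Fin n) (Fin n) 𝕜) *
    Matrix.diagonal (fun i =>
      ((Real.sqrt ((Matrix.posSemidef_conjTranspose_mul_self A).1.eigenvalues i) : ℝ) : 𝕜)) *
    (star (Matrix.posSemidef_conjTranspose_mul_self A).1.eigenvectorUnitary : Matrix (Fin n) (Fin n) 𝕜)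

/-- The Ky Fan `k`-norm: the sum of the `k` largest singular values. -/
noncomputable def kyFanNorm {𝕜 : Type*} [RCLike 𝕜] {n : ℕ} (k : ℕ)
    (A : Matrix (Fin n) (Fin n) 𝕜) : ℝ :=
  ∑ j ∈ Finset.univ.filter (fun j : Fin n => (j : ℕ) < k), eigValsDown (matAbs A) j

namespace Stmt7Aux

variable {n : ℕ}

lemma card_filt {k : ℕ} (hk : k ≤ n) :
    (Finset.univ.filter (fun j : Fin n => (j : ℕ) < k)).card = k := by
  have : (Finset.univ.filter (fun j : Fin n => (j : ℕ) < k))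
      = Finset.univ.map (Fin.castLEEmb hk) := by
    ext j
    simp only [Finset.mem_filter, Finset.mem_univ, true_and, Finset.mem_map]
    constructor
    · intro hj; exact ⟨⟨j, hj⟩, rfl⟩
    · rintro ⟨i, rfl⟩; exact i.2
  rw [this, Finset.card_map, Finset.card_univ, Fintype.card_fin]

lemma antitone_eigValsDown (A : Matrix (Fin n) (Fin n) ℂ) (hA : A.IsHermitian) :
    Antitone (eigValsDown A) := by
  intro a b hab
  unfold eigValsDown
  rw [dif_pos hA]
  exact Tuple.monotone_sort hA.eigenvalues (Fin.rev_le_rev.2 hab)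

lemma injective_eigValsDown (A : Matrix (Fin n) (Fin n) ℂ) (hA : A.IsHermitian)
    (h : Function.Injective hA.eigenvalues) : Function.Injective (eigValsDown A) := by
  unfold eigValsDown
  rw [dif_pos hA]
  exact (h.comp (Tuple.sort hA.eigenvalues).injective).comp Fin.rev_injective

lemma herm_smul_real (C : Matrix (Fin n) (Fin n) ℂ) (hC : C.IsHermitian) (t : ℝ) :
    (t • C).IsHermitian := by
  unfold Matrix.IsHermitian
  rw [Matrix.conjTranspose_smul, star_trivial, hC]

lemma exists_unitary_diag (M : Matrix (Fin n) (Fin n) ℂ) (hM : M.IsHermitian) :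
    ∃ V ∈ Matrix.unitaryGroup (Fin n) ℂ,
      V * M * star V = Matrix.diagonal (fun j => (eigValsDown M j : ℂ)) := by
  set W : Matrix (Fin n) (Fin n) ℂ := (hM.eigenvectorUnitary : Matrix (Fin n) (Fin n) ℂ) with hWdef
  have hW : W ∈ Matrix.unitaryGroup (Fin n) ℂ := hM.eigenvectorUnitary.2
  have hW1 : star W * W = 1 := (Unitary.mem_iff.mp hW).1
  set g : Fin n ≃ Fin n := Fin.revPerm.trans (Tuple.sort hM.eigenvalues) with hgdef
  refine ⟨(star W).submatrix g id, ?_, ?_⟩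
  · rw [Matrix.mem_unitaryGroup_iff]
    have hstar : star ((star W).submatrix (⇑g) id) = W.submatrix id (⇑g) := by
      rw [Matrix.star_eq_conjTranspose, Matrix.conjTranspose_submatrix,
        ← Matrix.star_eq_conjTranspose, star_star]
    rw [hstar, ← Matrix.submatrix_mul (star W) W g id g Function.bijective_id, hW1,
      Matrix.submatrix_one_equiv]
  · have hstar : star ((star W).submatrix (⇑g) id) = W.submatrix id (⇑g) := by
      rw [Matrix.star_eq_conjTranspose, Matrix.conjTranspose_submatrix,
        ← Matrix.star_eq_conjTranspose, star_star]
    rw [hstar]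
    have hdiag : star W * M * W = Matrix.diagonal (RCLike.ofReal ∘ hM.eigenvalues) := by
      conv_lhs => rw [hM.spectral_theorem]
      rw [Unitary.conjStarAlgAut_apply, ← hWdef]
      calc star W * (W * Matrix.diagonal (RCLike.ofReal ∘ hM.eigenvalues) * star W) * W
          = (star W * W) * Matrix.diagonal (RCLike.ofReal ∘ hM.eigenvalues) * (star W * W) := by
            noncomm_ring
        _ = _ := by rw [hW1, one_mul, mul_one]
    have e1 : (star W).submatrix (⇑g) id * M = (star W * M).submatrix (⇑g) id := by
      have h := Matrix.submatrix_mul (star W) M (⇑g) id id Function.bijective_id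
      simpa using h.symm
    have e2 : (star W * M).submatrix (⇑g) id * W.submatrix id (⇑g)
        = ((star W * M) * W).submatrix (⇑g) (⇑g) :=
      (Matrix.submatrix_mul _ _ (⇑g) id (⇑g) Function.bijective_id).symm
    rw [e1, e2, hdiag, Matrix.submatrix_diagonal_equiv]
    congr 1
    funext j
    simp only [Function.comp_apply, eigValsDown, dif_pos hM, hgdef, Equiv.trans_apply,
      Fin.revPerm_apply]
    rfl

lemma weight_bound {k : ℕ} (hcard : (Finset.univ.filter (fun j : Fin n => (j : ℕ) < k)).card = k)
    (Λ q : Fin n → ℝ) (h0 : ∀ i, 0 ≤ q i) (h1 : ∀ i, q i ≤ 1)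
    (hs : ∑ i, q i = k) (c g : ℝ)
    (hup : ∀ i : Fin n, (i : ℕ) < k → c + g ≤ Λ i)
    (hdn : ∀ i : Fin n, k ≤ (i : ℕ) → Λ i ≤ c) :
    ∑ i, Λ i * q i ≤ (∑ i ∈ Finset.univ.filter (fun j : Fin n => (j : ℕ) < k), Λ i)
      - g * (k - ∑ i ∈ Finset.univ.filter (fun j : Fin n => (j : ℕ) < k), q i) := by
  classical
  set F := Finset.univ.filter (fun j : Fin n => (j : ℕ) < k) with hF
  have hsplit : ∑ i ∈ F, Λ i * q i
      + ∑ i ∈ Finset.univ.filter (fun j : Fin n => ¬ ((j:ℕ) < k)), Λ i * q i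
      = ∑ i, Λ i * q i := Finset.sum_filter_add_sum_filter_not _ _ _
  have hqsplit : ∑ i ∈ F, q i
      + ∑ i ∈ Finset.univ.filter (fun j : Fin n => ¬ ((j:ℕ) < k)), q i
      = ∑ i, q i := Finset.sum_filter_add_sum_filter_not _ _ _
  have hb1 : ∑ i ∈ F, Λ i * q i ≤ ∑ i ∈ F, (Λ i - (c + g) * (1 - q i)) := by
    refine Finset.sum_le_sum fun i hi => ?_
    have hik : (i : ℕ) < k := (Finset.mem_filter.mp hi).2
    have h2 := hup i hik
    nlinarith [h1 i, h0 i]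
  have hb1' : ∑ i ∈ F, (Λ i - (c + g) * (1 - q i))
      = (∑ i ∈ F, Λ i) - (c + g) * (k - ∑ i ∈ F, q i) := by
    rw [Finset.sum_sub_distrib, ← Finset.mul_sum, Finset.sum_sub_distrib, Finset.sum_const,
      hcard, nsmul_eq_mul, mul_one]
  have hb2 : ∑ i ∈ Finset.univ.filter (fun j : Fin n => ¬ ((j:ℕ) < k)), Λ i * q i
      ≤ c * (k - ∑ i ∈ F, q i) := by
    have hle : ∑ i ∈ Finset.univ.filter (fun j : Fin n => ¬ ((j:ℕ) < k)), Λ i * q i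
        ≤ c * ∑ i ∈ Finset.univ.filter (fun j : Fin n => ¬ ((j:ℕ) < k)), q i := by
      rw [Finset.mul_sum]
      refine Finset.sum_le_sum fun i hi => ?_
      have hik : k ≤ (i : ℕ) := Nat.le_of_not_lt (Finset.mem_filter.mp hi).2
      exact mul_le_mul_of_nonneg_right (hdn i hik) (h0 i)
    have hq2 : ∑ i ∈ Finset.univ.filter (fun j : Fin n => ¬ ((j:ℕ) < k)), q i
        = (k : ℝ) - ∑ i ∈ F, q i := by linarith [hqsplit, hs]
    rw [hq2] at hle
    exact hle
  linarith [hb1, hb1', hb2, hsplit]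

lemma D_mul_D (k : ℕ) :
    (Matrix.diagonal (fun j : Fin n => if (j:ℕ) < k then (1:ℂ) else 0)) *
    (Matrix.diagonal (fun j : Fin n => if (j:ℕ) < k then (1:ℂ) else 0)) =
    Matrix.diagonal (fun j : Fin n => if (j:ℕ) < k then (1:ℂ) else 0) := by
  rw [Matrix.diagonal_mul_diagonal]
  ext i j
  simp only [Matrix.diagonal_apply, Pi.mul_apply]
  split_ifs <;> simp

lemma D_herm (k : ℕ) :
    star (Matrix.diagonal (fun j : Fin n => if (j:ℕ) < k then (1:ℂ) else 0)) =
    Matrix.diagonal (fun j : Fin n => if (j:ℕ) < k then (1:ℂ) else 0) := by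
  rw [Matrix.star_eq_conjTranspose, Matrix.diagonal_conjTranspose]
  ext i j
  simp only [Matrix.diagonal_apply, Pi.star_apply]
  split_ifs <;> simp [apply_ite (star : ℂ → ℂ)]

lemma XDX_diag (k : ℕ) (X : Matrix (Fin n) (Fin n) ℂ) (i : Fin n) :
    (X * Matrix.diagonal (fun j : Fin n => if (j:ℕ) < k then (1:ℂ) else 0) * star X) i i
      = ((∑ j ∈ Finset.univ.filter (fun j : Fin n => (j:ℕ) < k), Complex.normSq (X i j) : ℝ) : ℂ) := by
  rw [Matrix.mul_apply]
  have : ∀ j, (X * Matrix.diagonal (fun j : Fin n => if (j:ℕ) < k then (1:ℂ) else 0)) i j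
      * (star X) j i = if (j:ℕ) < k then (Complex.normSq (X i j) : ℂ) else 0 := by
    intro j
    rw [Matrix.mul_diagonal, Matrix.star_eq_conjTranspose, Matrix.conjTranspose_apply]
    by_cases h : (j:ℕ) < k
    · simp only [h, if_true, mul_one]
      exact Complex.mul_conj (X i j)
    · simp [h]
  simp_rw [this]
  rw [Complex.ofReal_sum, Finset.sum_filter]

lemma row_sum (X : Matrix (Fin n) (Fin n) ℂ) (hX2 : X * star X = 1) (i : Fin n) :
    ∑ j, Complex.normSq (X i j) = 1 := by
  have h := congrFun (congrFun hX2 i) i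
  rw [Matrix.mul_apply] at h
  have h1 : ∀ j, X i j * (star X) j i = (Complex.normSq (X i j) : ℂ) := by
    intro j
    rw [Matrix.star_eq_conjTranspose, Matrix.conjTranspose_apply]
    exact Complex.mul_conj (X i j)
  simp_rw [h1, Matrix.one_apply_eq] at h
  exact_mod_cast h

lemma col_sum (X : Matrix (Fin n) (Fin n) ℂ) (hX1 : star X * X = 1) (j : Fin n) :
    ∑ i, Complex.normSq (X i j) = 1 := by
  have h := congrFun (congrFun hX1 j) j
  rw [Matrix.mul_apply] at h
  have h1 : ∀ i, (star X) j i * X i j = (Complex.normSq (X i j) : ℂ) := by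
    intro i
    rw [Matrix.star_eq_conjTranspose, Matrix.conjTranspose_apply, mul_comm]
    exact Complex.mul_conj (X i j)
  simp_rw [h1, Matrix.one_apply_eq] at h
  exact_mod_cast h

lemma trace_diag_mul (v : Fin n → ℂ) (N : Matrix (Fin n) (Fin n) ℂ) :
    (Matrix.diagonal v * N).trace = ∑ i, v i * N i i := by
  simp [Matrix.trace, Matrix.diag, Matrix.diagonal_mul]

lemma trace_D (k : ℕ) (hk : k ≤ n) :
    (Matrix.diagonal (fun j : Fin n => if (j:ℕ) < k then (1:ℂ) else 0)).trace = (k : ℂ) := by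
  rw [Matrix.trace_diagonal]
  rw [Finset.sum_boole, card_filt hk]

lemma sumsq_Z (k : ℕ) (hk : k ≤ n) (X : Matrix (Fin n) (Fin n) ℂ)
    (hX1 : star X * X = 1) :
    ∑ p : Fin n × Fin n, Complex.normSq
      ((X * Matrix.diagonal (fun j : Fin n => if (j:ℕ) < k then (1:ℂ) else 0) * star X
        - Matrix.diagonal (fun j : Fin n => if (j:ℕ) < k then (1:ℂ) else 0)) p.1 p.2)
      = 2 * ((k : ℝ) - ∑ i ∈ Finset.univ.filter (fun j : Fin n => (j:ℕ) < k),
          ∑ j ∈ Finset.univ.filter (fun j : Fin n => (j:ℕ) < k), Complex.normSq (X i j)) := by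
  classical
  set D : Matrix (Fin n) (Fin n) ℂ :=
    Matrix.diagonal (fun j : Fin n => if (j:ℕ) < k then (1:ℂ) else 0) with hDdef
  set Y : Matrix (Fin n) (Fin n) ℂ := X * D * star X with hYdef
  set Z : Matrix (Fin n) (Fin n) ℂ := Y - D with hZdef
  set s : ℝ := ∑ i ∈ Finset.univ.filter (fun j : Fin n => (j:ℕ) < k),
      ∑ j ∈ Finset.univ.filter (fun j : Fin n => (j:ℕ) < k), Complex.normSq (X i j) with hsdef
  have hDD : D * D = D := by rw [hDdef]; exact D_mul_D k
  have hDh : star D = D := by rw [hDdef]; exact D_herm k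
  have htrD : D.trace = (k : ℂ) := by rw [hDdef]; exact trace_D k hk
  have hYdiag : ∀ i : Fin n, Y i i = ((∑ j ∈ Finset.univ.filter (fun j : Fin n => (j:ℕ) < k),
      Complex.normSq (X i j) : ℝ) : ℂ) := by
    intro i
    rw [hYdef, hDdef]
    exact XDX_diag k X i
  have hYherm : star Y = Y := by
    rw [hYdef, Matrix.star_mul, Matrix.star_mul, star_star, hDh, ← Matrix.mul_assoc]
  have hZherm : star Z = Z := by
    rw [hZdef, star_sub, hYherm, hDh]
  have h1 : ∑ p : Fin n × Fin n, Complex.normSq (Z p.1 p.2) = ((Z * Z).trace).re := by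
    have htr : (Z * Z).trace = ((∑ p : Fin n × Fin n, Complex.normSq (Z p.1 p.2) : ℝ) : ℂ) := by
      rw [Matrix.trace]
      simp_rw [Matrix.diag, Matrix.mul_apply]
      rw [← Finset.sum_product']
      rw [Complex.ofReal_sum]
      refine Finset.sum_congr rfl fun p _ => ?_
      have hz : Z p.2 p.1 = star (Z p.1 p.2) := by
        conv_lhs => rw [← hZherm]
        rfl
      rw [hz]
      exact Complex.mul_conj (Z p.1 p.2)
    rw [htr, Complex.ofReal_re]
  have hYY : Y * Y = Y := by
    have e : Y * Y = X * (D * ((star X * X) * (D * star X))) := by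
      rw [hYdef]; simp only [Matrix.mul_assoc]
    rw [e, hX1, Matrix.one_mul, ← Matrix.mul_assoc D D (star X), hDD, hYdef, Matrix.mul_assoc]
  have htrY : Y.trace = (k : ℂ) := by
    rw [hYdef, Matrix.trace_mul_comm, ← Matrix.mul_assoc, hX1, Matrix.one_mul, htrD]
  have htrDY : (D * Y).trace = ((s : ℝ) : ℂ) := by
    rw [hDdef, trace_diag_mul, hsdef]
    have : ∀ i : Fin n, (if (i:ℕ) < k then (1:ℂ) else 0) * Y i i
        = if (i:ℕ) < k then ((∑ j ∈ Finset.univ.filter (fun j : Fin n => (j:ℕ) < k),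
            Complex.normSq (X i j) : ℝ) : ℂ) else 0 := by
      intro i
      by_cases h : (i:ℕ) < k
      · simp only [h, if_true, one_mul]
        exact hYdiag i
      · simp [h]
    simp_rw [this]
    rw [Complex.ofReal_sum, Finset.sum_filter]
  have htrYD : (Y * D).trace = ((s : ℝ) : ℂ) := by rw [Matrix.trace_mul_comm, htrDY]
  have htrDD : (D * D).trace = (k : ℂ) := by rw [hDD, htrD]
  have hZZ : (Z * Z).trace = (k : ℂ) - s - s + k := by
    rw [hZdef, sub_mul, mul_sub, mul_sub, Matrix.trace_sub, Matrix.trace_sub, Matrix.trace_sub,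
      hYY, htrY, htrYD, htrDY, htrDD]
    ring
  rw [h1, hZZ]
  have : ((k : ℂ) - s - s + k).re = (k : ℝ) - s - s + k := by
    simp [Complex.sub_re, Complex.add_re]
  rw [this]
  ring

lemma retrace_CS (Cm Z : Matrix (Fin n) (Fin n) ℂ) :
    |((Cm * Z).trace).re| ≤ Real.sqrt (∑ p : Fin n × Fin n, Complex.normSq (Cm p.1 p.2))
      * Real.sqrt (∑ p : Fin n × Fin n, Complex.normSq (Z p.1 p.2)) := by
  have htr : (Cm * Z).trace = ∑ p : Fin n × Fin n, Cm p.1 p.2 * Z p.2 p.1 := by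
    rw [Matrix.trace]
    simp_rw [Matrix.diag, Matrix.mul_apply]
    rw [← Finset.sum_product']
    rfl
  rw [htr]
  have h1 : |(∑ p : Fin n × Fin n, Cm p.1 p.2 * Z p.2 p.1).re|
      ≤ ∑ p : Fin n × Fin n, ‖Cm p.1 p.2‖ * ‖Z p.2 p.1‖ := by
    rw [Complex.re_sum]
    refine (Finset.abs_sum_le_sum_abs _ _).trans (Finset.sum_le_sum fun p _ => ?_)
    calc |(Cm p.1 p.2 * Z p.2 p.1).re| ≤ ‖Cm p.1 p.2 * Z p.2 p.1‖ :=
          Complex.abs_re_le_norm _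
      _ = ‖Cm p.1 p.2‖ * ‖Z p.2 p.1‖ := norm_mul _ _
  refine h1.trans ?_
  have h2 : ∑ p : Fin n × Fin n, ‖Cm p.1 p.2‖ * ‖Z p.2 p.1‖
      ≤ Real.sqrt (∑ p : Fin n × Fin n, ‖Cm p.1 p.2‖ ^ 2)
        * Real.sqrt (∑ p : Fin n × Fin n, ‖Z p.2 p.1‖ ^ 2) :=
    Real.sum_mul_le_sqrt_mul_sqrt _ _ _
  refine h2.trans (le_of_eq ?_)
  congr 1
  · congr 1
    exact Finset.sum_congr rfl fun p _ => Complex.sq_norm _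
  · rw [show (∑ p : Fin n × Fin n, ‖Z p.2 p.1‖ ^ 2)
        = ∑ p : Fin n × Fin n, Complex.normSq (Z p.1 p.2) from ?_]
    · rw [← Fintype.sum_equiv (Equiv.prodComm (Fin n) (Fin n))
        (fun p => Complex.normSq (Z p.2 p.1)) (fun p => Complex.normSq (Z p.1 p.2)) (fun p => rfl)]
      exact Finset.sum_congr rfl fun p _ => Complex.sq_norm _

lemma conj_eq (M V Dg : Matrix (Fin n) (Fin n) ℂ) (hV1 : star V * V = 1)
    (h : V * M * star V = Dg) : M = star V * Dg * V := by
  rw [← h]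
  calc M = 1 * M * 1 := by rw [Matrix.one_mul, Matrix.mul_one]
    _ = (star V * V) * M * (star V * V) := by rw [hV1]
    _ = star V * (V * M * star V) * V := by simp only [Matrix.mul_assoc]

lemma trace_pair (V W Λd E : Matrix (Fin n) (Fin n) ℂ) :
    ((star V * Λd * V) * (star W * E * W)).trace
      = (Λd * ((V * star W) * E * star (V * star W))).trace := by
  have hstar : star (V * star W) = W * star V := by rw [Matrix.star_mul, star_star]
  rw [hstar]
  calc ((star V * Λd * V) * (star W * E * W)).trace
      = (star V * (Λd * (V * (star W * (E * W))))).trace := by simp only [Matrix.mul_assoc]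
    _ = ((Λd * (V * (star W * (E * W)))) * star V).trace := Matrix.trace_mul_comm _ _
    _ = (Λd * ((V * star W) * E * (W * star V))).trace := by simp only [Matrix.mul_assoc]

lemma trace_diag_XDX (k : ℕ) (Λ : Fin n → ℝ) (X : Matrix (Fin n) (Fin n) ℂ) :
    (Matrix.diagonal (fun i : Fin n => ((Λ i : ℝ) : ℂ))
      * (X * Matrix.diagonal (fun j : Fin n => if (j:ℕ) < k then (1:ℂ) else 0) * star X)).trace
    = ((∑ i, Λ i * (∑ j ∈ Finset.univ.filter (fun j : Fin n => (j:ℕ) < k),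
        Complex.normSq (X i j)) : ℝ) : ℂ) := by
  rw [trace_diag_mul, Complex.ofReal_sum]
  refine Finset.sum_congr rfl fun i _ => ?_
  rw [XDX_diag k X i, ← Complex.ofReal_mul]

lemma trace_diag_D (k : ℕ) (Λ : Fin n → ℝ) :
    (Matrix.diagonal (fun i : Fin n => ((Λ i : ℝ) : ℂ))
      * Matrix.diagonal (fun j : Fin n => if (j:ℕ) < k then (1:ℂ) else 0)).trace
    = ((∑ i ∈ Finset.univ.filter (fun j : Fin n => (j:ℕ) < k), Λ i : ℝ) : ℂ) := by
  rw [Matrix.diagonal_mul_diagonal, Matrix.trace_diagonal, Complex.ofReal_sum, Finset.sum_filter]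
  refine Finset.sum_congr rfl fun i _ => ?_
  by_cases h : (i:ℕ) < k <;> simp [h]

lemma kyfan {k : ℕ} (hk : k ≤ n) (Λ : Fin n → ℝ) (X : Matrix (Fin n) (Fin n) ℂ)
    (hX1 : star X * X = 1) (hX2 : X * star X = 1) (c g : ℝ)
    (hup : ∀ i : Fin n, (i : ℕ) < k → c + g ≤ Λ i)
    (hdn : ∀ i : Fin n, k ≤ (i : ℕ) → Λ i ≤ c) :
    ∑ i, Λ i * (∑ j ∈ Finset.univ.filter (fun j : Fin n => (j:ℕ) < k), Complex.normSq (X i j))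
      ≤ (∑ i ∈ Finset.univ.filter (fun j : Fin n => (j:ℕ) < k), Λ i)
        - g * (k - ∑ i ∈ Finset.univ.filter (fun j : Fin n => (j:ℕ) < k),
            ∑ j ∈ Finset.univ.filter (fun j : Fin n => (j:ℕ) < k), Complex.normSq (X i j)) := by
  refine weight_bound (card_filt hk) Λ _ ?_ ?_ ?_ c g hup hdn
  · intro i
    exact Finset.sum_nonneg fun j _ => Complex.normSq_nonneg _
  · intro i
    calc ∑ j ∈ Finset.univ.filter (fun j : Fin n => (j:ℕ) < k), Complex.normSq (X i j)
        ≤ ∑ j, Complex.normSq (X i j) :=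
          Finset.sum_le_sum_of_subset_of_nonneg (Finset.filter_subset _ _)
            (fun j _ _ => Complex.normSq_nonneg _)
      _ = 1 := row_sum X hX2 i
  · rw [Finset.sum_comm]
    calc ∑ j ∈ Finset.univ.filter (fun j : Fin n => (j:ℕ) < k), ∑ i, Complex.normSq (X i j)
        = ∑ _j ∈ Finset.univ.filter (fun j : Fin n => (j:ℕ) < k), (1:ℝ) :=
          Finset.sum_congr rfl fun j _ => col_sum X hX1 j
      _ = (k : ℝ) := by rw [Finset.sum_const, card_filt hk, nsmul_eq_mul, mul_one]

end Stmt7Aux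

lemma quad_bound (L g0 Mc r tt : ℝ) (hg0 : 0 < g0) (hr0 : 0 ≤ r) (hMc0 : 0 ≤ Mc)
    (hmain : L ≤ -(g0 * (r^2/2)) + tt * (Mc * r)) (htt : 0 ≤ tt) :
    L ≤ Mc^2/(2*g0) * tt^2 := by
  have h2g : (0:ℝ) < 2*g0 := by linarith
  rw [div_mul_eq_mul_div, le_div_iff₀ h2g]
  nlinarith [sq_nonneg (g0*r - tt*Mc), mul_le_mul_of_nonneg_right hmain (le_of_lt h2g)]

lemma re_ofReal_add_smul (x t : ℝ) (z : ℂ) : ((x : ℂ) + t • z).re = x + t * z.re := by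
  simp [Complex.add_re, Complex.real_smul, Complex.mul_re]

set_option maxHeartbeats 2000000 in
open Stmt7Aux in
/-- Proposition `prop:delta`, simple-eigenvalue case: if all eigenvalues of
the Hermitian matrix `A` are simple, `U` is the unitary with `U A U* = diag(λ↓(A))`, so that
`P_k(A) = U* D_k U` with `D_k` the diagonal `0/1`-indicator of the first `k` entries, then
`t ↦ Σ_{j=1}^k λ_j↓(A + tC)` is differentiable at `t = 0` with derivative `Tr[P_k(A) C]`. -/
theorem stmt7 {n : ℕ} (A C : Matrix (Fin n) (Fin n) ℂ)
    (hA : A.IsHermitian) (hC : C.IsHermitian)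
    (hsimple : Function.Injective hA.eigenvalues)
    (U : Matrix (Fin n) (Fin n) ℂ) (hU : U ∈ Matrix.unitaryGroup (Fin n) ℂ)
    (hUdiag : U * A * star U = Matrix.diagonal (fun j => (eigValsDown A j : ℂ)))
    (k : ℕ) :
    HasDerivAt
      (fun t : ℝ => ∑ j ∈ Finset.univ.filter (fun j : Fin n => (j : ℕ) < k),
        eigValsDown (A + t • C) j)
      (((star U * Matrix.diagonal (fun j : Fin n => if (j : ℕ) < k then (1 : ℂ) else 0) * U)
          * C).trace.re) 0 := by
  classical
  have hU1 : star U * U = 1 := (Unitary.mem_iff.mp hU).1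
  have hU2 : U * star U = 1 := (Unitary.mem_iff.mp hU).2
  have hMt : ∀ t : ℝ, (A + t • C).IsHermitian := fun t => hA.add (herm_smul_real C hC t)
  by_cases hk0 : k = 0
  · subst hk0
    have hf : (fun t : ℝ => ∑ j ∈ Finset.univ.filter (fun j : Fin n => (j:ℕ) < 0),
        eigValsDown (A + t • C) j) = fun _ => (0:ℝ) := by
      funext t; simp
    have hD0 : Matrix.diagonal (fun j : Fin n => if (j:ℕ) < 0 then (1:ℂ) else 0)
        = (0 : Matrix (Fin n) (Fin n) ℂ) := by
      have : (fun j : Fin n => if (j:ℕ) < 0 then (1:ℂ) else 0) = fun _ => (0:ℂ) := by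
        funext j; simp
      rw [this, Matrix.diagonal_zero]
    rw [hf, hD0]
    simpa using hasDerivAt_const (0:ℝ) (0:ℝ)
  by_cases hkn : n ≤ k
  · -- the sum is the full trace, a linear function of `t`
    have hsum : ∀ (M : Matrix (Fin n) (Fin n) ℂ) (hM : M.IsHermitian),
        ∑ j ∈ Finset.univ.filter (fun j : Fin n => (j:ℕ) < k), eigValsDown M j = M.trace.re := by
      intro M hM
      obtain ⟨V, hV, hVd⟩ := exists_unitary_diag M hM
      have hV1 : star V * V = 1 := (Unitary.mem_iff.mp hV).1
      have htr : M.trace = (V * M * star V).trace := by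
        refine Eq.symm ?_
        rw [Matrix.trace_mul_comm, ← Matrix.mul_assoc, hV1, Matrix.one_mul]
      have hfull : Finset.univ.filter (fun j : Fin n => (j:ℕ) < k) = Finset.univ := by
        refine Finset.filter_true_of_mem fun j _ => lt_of_lt_of_le j.2 hkn
      rw [hfull, htr, hVd, Matrix.trace_diagonal, ← Complex.ofReal_sum, Complex.ofReal_re]
    have hD1 : Matrix.diagonal (fun j : Fin n => if (j:ℕ) < k then (1:ℂ) else 0)
        = (1 : Matrix (Fin n) (Fin n) ℂ) := by
      have : (fun j : Fin n => if (j:ℕ) < k then (1:ℂ) else 0) = fun _ => (1:ℂ) := by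
        funext j; simp [lt_of_lt_of_le j.2 hkn]
      rw [this, Matrix.diagonal_one]
    have hfun : (fun t : ℝ => ∑ j ∈ Finset.univ.filter (fun j : Fin n => (j:ℕ) < k),
        eigValsDown (A + t • C) j) = fun t : ℝ => A.trace.re + t * C.trace.re := by
      funext t
      rw [hsum _ (hMt t), Matrix.trace_add, Matrix.trace_smul, Complex.add_re]
      congr 1
      simp [Complex.real_smul, Complex.mul_re]
    rw [hfun, hD1, Matrix.mul_one, hU1, Matrix.one_mul]
    simpa using ((hasDerivAt_id (0:ℝ)).mul_const (C.trace.re)).const_add (A.trace.re)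
  push_neg at hkn
  have hk1 : 0 < k := Nat.pos_of_ne_zero hk0
  have hkle : k ≤ n := le_of_lt hkn
  choose V hVmem hVd using fun t : ℝ => exists_unitary_diag (A + t • C) (hMt t)
  have hV1 : ∀ t, star (V t) * V t = 1 := fun t => (Unitary.mem_iff.mp (hVmem t)).1
  have hV2 : ∀ t, V t * star (V t) = 1 := fun t => (Unitary.mem_iff.mp (hVmem t)).2
  set D : Matrix (Fin n) (Fin n) ℂ :=
    Matrix.diagonal (fun j : Fin n => if (j : ℕ) < k then (1:ℂ) else 0) with hDdef
  set f : ℝ → ℝ := fun t : ℝ => ∑ j ∈ Finset.univ.filter (fun j : Fin n => (j : ℕ) < k),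
    eigValsDown (A + t • C) j with hfdef
  set d : ℝ := (((star U * D * U) * C).trace).re with hddef
  set ΛA : Fin n → ℝ := eigValsDown A with hLAdef
  have hanti : Antitone ΛA := antitone_eigValsDown A hA
  have hstrict : StrictAnti ΛA :=
    hanti.strictAnti_of_injective (injective_eigValsDown A hA hsimple)
  set ik : Fin n := ⟨k, hkn⟩ with hikdef
  set ik1 : Fin n := ⟨k - 1, by omega⟩ with hik1def
  set g0 : ℝ := ΛA ik1 - ΛA ik with hg0def
  have hg0 : 0 < g0 := by
    rw [hg0def]
    have : ik1 < ik := by rw [Fin.lt_def]; simp [hikdef, hik1def]; omega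
    linarith [hstrict this]
  set Cm : Matrix (Fin n) (Fin n) ℂ := U * C * star U with hCmdef
  set Mc : ℝ := Real.sqrt (∑ p : Fin n × Fin n, Complex.normSq (Cm p.1 p.2)) with hMcdef
  have hMc0 : 0 ≤ Mc := Real.sqrt_nonneg _
  have hAeq : A = star U * Matrix.diagonal (fun j => ((ΛA j : ℝ) : ℂ)) * U :=
    conj_eq A U _ hU1 hUdiag
  have hCeq : C = star U * Cm * U := conj_eq C U Cm hU1 hCmdef.symm
  have hMteq : ∀ t : ℝ, A + t • C
      = star (V t) * Matrix.diagonal (fun j => ((eigValsDown (A + t • C) j : ℝ) : ℂ)) * V t :=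
    fun t => conj_eq _ (V t) _ (hV1 t) (hVd t)
  have hf0 : f 0 = ∑ i ∈ Finset.univ.filter (fun j : Fin n => (j : ℕ) < k), ΛA i := by
    rw [hfdef, hLAdef]
    simp
  have hd' : d = ((Cm * D).trace).re := by
    rw [hddef, Matrix.trace_mul_comm]
    conv_lhs => rw [hCeq]
    rw [trace_pair, hU2, star_one, Matrix.one_mul, Matrix.mul_one]
  -- the key quadratic bounds
  have key : ∀ t : ℝ, 0 ≤ f t - f 0 - t * d ∧ f t - f 0 - t * d ≤ Mc ^ 2 / (2 * g0) * t ^ 2 := by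
    intro t
    set Λt : Fin n → ℝ := eigValsDown (A + t • C) with hLtdef
    have hantit : Antitone Λt := antitone_eigValsDown _ (hMt t)
    have hft : f t = ∑ i ∈ Finset.univ.filter (fun j : Fin n => (j : ℕ) < k), Λt i := by
      rw [hfdef]
    set X : Matrix (Fin n) (Fin n) ℂ := U * star (V t) with hXdef
    have hX1 : star X * X = 1 := by
      have e : star X * X = V t * ((star U * U) * star (V t)) := by
        rw [hXdef, Matrix.star_mul, star_star]; simp only [Matrix.mul_assoc]
      rw [e, hU1, Matrix.one_mul, hV2 t]
    have hX2 : X * star X = 1 := by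
      have e : X * star X = U * ((star (V t) * V t) * star U) := by
        rw [hXdef, Matrix.star_mul, star_star]; simp only [Matrix.mul_assoc]
      rw [e, hV1 t, Matrix.one_mul, hU2]
    set Xp : Matrix (Fin n) (Fin n) ℂ := V t * star U with hXpdef
    have hXp1 : star Xp * Xp = 1 := by
      have e : star Xp * Xp = U * ((star (V t) * V t) * star U) := by
        rw [hXpdef, Matrix.star_mul, star_star]; simp only [Matrix.mul_assoc]
      rw [e, hV1 t, Matrix.one_mul, hU2]
    have hXp2 : Xp * star Xp = 1 := by
      have e : Xp * star Xp = V t * ((star U * U) * star (V t)) := by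
        rw [hXpdef, Matrix.star_mul, star_star]; simp only [Matrix.mul_assoc]
      rw [e, hU1, Matrix.one_mul, hV2 t]
    set sT : ℝ := ∑ i ∈ Finset.univ.filter (fun j : Fin n => (j : ℕ) < k),
      ∑ j ∈ Finset.univ.filter (fun j : Fin n => (j : ℕ) < k), Complex.normSq (X i j) with hsTdef
    -- Ky Fan for A with gap
    have hup : ∀ i : Fin n, (i : ℕ) < k → ΛA ik + g0 ≤ ΛA i := by
      intro i hi
      have h1 : i ≤ ik1 := by rw [Fin.le_def]; simp [hik1def]; omega
      have h2 := hanti h1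
      rw [hg0def]; linarith
    have hdn : ∀ i : Fin n, k ≤ (i : ℕ) → ΛA i ≤ ΛA ik := by
      intro i hi
      exact hanti (by rw [Fin.le_def]; simpa [hikdef] using hi)
    have hkyA := kyfan hkle ΛA X hX1 hX2 (ΛA ik) g0 hup hdn
    rw [← hsTdef, ← hf0] at hkyA
    -- Ky Fan for A + tC without gap
    have hupt : ∀ i : Fin n, (i : ℕ) < k → Λt ik + 0 ≤ Λt i := by
      intro i hi
      rw [add_zero]
      exact hantit (by rw [Fin.le_def]; simp [hikdef]; omega)
    have hdnt : ∀ i : Fin n, k ≤ (i : ℕ) → Λt i ≤ Λt ik := by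
      intro i hi
      exact hantit (by rw [Fin.le_def]; simpa [hikdef] using hi)
    have hkyT := kyfan hkle Λt Xp hXp1 hXp2 (Λt ik) 0 hupt hdnt
    rw [← hft] at hkyT
    simp only [zero_mul, sub_zero] at hkyT
    -- trace identities
    have T1 : ((A + t • C) * (star (V t) * D * V t)).trace = ((f t : ℝ) : ℂ) := by
      conv_lhs => rw [hMteq t]
      rw [trace_pair, hV2 t, star_one, Matrix.one_mul, Matrix.mul_one, hDdef, ← hLtdef,
        trace_diag_D k Λt, ← hft]
    have T3 : (A * (star (V t) * D * V t)).trace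
        = ((∑ i, ΛA i * (∑ j ∈ Finset.univ.filter (fun j : Fin n => (j : ℕ) < k),
            Complex.normSq (X i j)) : ℝ) : ℂ) := by
      conv_lhs => rw [hAeq]
      rw [trace_pair, ← hXdef, hDdef, trace_diag_XDX k ΛA X]
    have T4 : (C * (star (V t) * D * V t)).trace = (Cm * (X * D * star X)).trace := by
      conv_lhs => rw [hCeq]
      rw [trace_pair, ← hXdef]
    have T5 : ((A + t • C) * (star U * D * U)).trace
        = ((∑ i, Λt i * (∑ j ∈ Finset.univ.filter (fun j : Fin n => (j : ℕ) < k),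
            Complex.normSq (Xp i j)) : ℝ) : ℂ) := by
      conv_lhs => rw [hMteq t]
      rw [trace_pair, ← hXpdef, hDdef, ← hLtdef, trace_diag_XDX k Λt Xp]
    have TA : (A * (star U * D * U)).trace = ((f 0 : ℝ) : ℂ) := by
      conv_lhs => rw [hAeq]
      rw [trace_pair, hU2, star_one, Matrix.one_mul, Matrix.mul_one, hDdef,
        trace_diag_D k ΛA, ← hf0]
    -- expansion of the perturbed matrix products
    have expand : ∀ P : Matrix (Fin n) (Fin n) ℂ,
        ((A + t • C) * P).trace = (A * P).trace + t • (C * P).trace := by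
      intro P
      rw [Matrix.add_mul, Matrix.trace_add, Matrix.smul_mul, Matrix.trace_smul]
    -- lower bound : f 0 + t * d ≤ f t
    have hlow : f 0 + t * d ≤ f t := by
      have e1 := expand (star U * D * U)
      rw [T5, TA] at e1
      have e2 : (∑ i, Λt i * (∑ j ∈ Finset.univ.filter (fun j : Fin n => (j : ℕ) < k),
          Complex.normSq (Xp i j))) = f 0 + t * d := by
        have h := congrArg Complex.re e1
        rw [Complex.ofReal_re, re_ofReal_add_smul] at h
        rw [h, hddef, Matrix.trace_mul_comm C]
      rw [e2] at hkyT
      exact hkyT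
    -- upper bound pieces
    have hq1 : sT ≤ (k : ℝ) := by
      rw [hsTdef]
      calc ∑ i ∈ Finset.univ.filter (fun j : Fin n => (j : ℕ) < k),
            ∑ j ∈ Finset.univ.filter (fun j : Fin n => (j : ℕ) < k), Complex.normSq (X i j)
          ≤ ∑ _i ∈ Finset.univ.filter (fun j : Fin n => (j : ℕ) < k), (1:ℝ) := by
            refine Finset.sum_le_sum fun i _ => ?_
            calc ∑ j ∈ Finset.univ.filter (fun j : Fin n => (j : ℕ) < k), Complex.normSq (X i j)
                ≤ ∑ j, Complex.normSq (X i j) :=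
                  Finset.sum_le_sum_of_subset_of_nonneg (Finset.filter_subset _ _)
                    (fun j _ _ => Complex.normSq_nonneg _)
              _ = 1 := row_sum X hX2 i
        _ = (k : ℝ) := by rw [Finset.sum_const, card_filt hkle, nsmul_eq_mul, mul_one]
    have hdelta : |((Cm * (X * D * star X - D)).trace).re|
        ≤ Mc * Real.sqrt (2 * ((k : ℝ) - sT)) := by
      refine (retrace_CS Cm (X * D * star X - D)).trans ?_
      rw [hMcdef]
      refine mul_le_mul_of_nonneg_left (le_of_eq ?_) (Real.sqrt_nonneg _)
      congr 1
      rw [hDdef, sumsq_Z k hkle X hX1, ← hsTdef]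
    -- upper bound : f t ≤ f 0 + t * d + stuff
    have hupper : f t - f 0 - t * d ≤ Mc ^ 2 / (2 * g0) * t ^ 2 := by
      have e1 := expand (star (V t) * D * V t)
      rw [T1, T3] at e1
      have e2 : f t = (∑ i, ΛA i * (∑ j ∈ Finset.univ.filter (fun j : Fin n => (j : ℕ) < k),
          Complex.normSq (X i j))) + t * ((C * (star (V t) * D * V t)).trace).re := by
        have h := congrArg Complex.re e1
        rw [Complex.ofReal_re, re_ofReal_add_smul] at h
        exact h
      have hdiff : ((C * (star (V t) * D * V t)).trace).re
          = d + ((Cm * (X * D * star X - D)).trace).re := by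
        rw [T4, hd']
        rw [mul_sub, Matrix.trace_sub, Complex.sub_re]
        ring
      set r : ℝ := Real.sqrt (2 * ((k : ℝ) - sT)) with hrdef
      have hr0 : 0 ≤ r := Real.sqrt_nonneg _
      have hsq : r ^ 2 = 2 * ((k : ℝ) - sT) := Real.sq_sqrt (by linarith [hq1])
      have h3 : t * ((Cm * (X * D * star X - D)).trace).re ≤ |t| * (Mc * r) := by
        refine (le_abs_self _).trans ?_
        rw [abs_mul]
        exact mul_le_mul_of_nonneg_left hdelta (abs_nonneg t)
      rw [hdiff] at e2
      have e2' : f t = (∑ i, ΛA i * (∑ j ∈ Finset.univ.filter (fun j : Fin n => (j : ℕ) < k),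
          Complex.normSq (X i j))) + t * d
          + t * ((Cm * (X * D * star X - D)).trace).re := by
        rw [e2]; ring
      have hks : (k : ℝ) - sT = r ^ 2 / 2 := by linarith
      have hmain : f t - f 0 - t * d ≤ -(g0 * (r ^ 2 / 2)) + |t| * (Mc * r) := by
        rw [← hks]
        linarith [hkyA, h3, e2']
      have hq := quad_bound (f t - f 0 - t * d) g0 Mc r |t| hg0 hr0 hMc0 hmain (abs_nonneg t)
      rw [sq_abs] at hq
      exact hq
    exact ⟨by linarith, hupper⟩
  -- conclude differentiability from the quadratic bounds
  have hK : 0 ≤ Mc ^ 2 / (2 * g0) := by positivity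
  rw [hasDerivAt_iff_isLittleO]
  refine Asymptotics.isLittleO_iff.2 fun c hc => ?_
  have hpos : 0 < c / (Mc ^ 2 / (2 * g0) + 1) := by positivity
  filter_upwards [Metric.ball_mem_nhds (0:ℝ) hpos] with t ht
  rw [Metric.mem_ball, Real.dist_eq, sub_zero] at ht
  obtain ⟨h1, h2⟩ := key t
  have habs : |f t - f 0 - t * d| ≤ Mc ^ 2 / (2 * g0) * t ^ 2 := by
    rw [abs_le]
    refine ⟨?_, h2⟩
    have := mul_nonneg hK (sq_nonneg t)
    linarith
  simp only [sub_zero, smul_eq_mul, Real.norm_eq_abs]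
  calc |f t - f 0 - t * d| ≤ Mc ^ 2 / (2 * g0) * t ^ 2 := habs
    _ = (Mc ^ 2 / (2 * g0) * |t|) * |t| := by rw [← sq_abs t]; ring
    _ ≤ c * |t| := by
      refine mul_le_mul_of_nonneg_right ?_ (abs_nonneg t)
      have h4 : Mc ^ 2 / (2 * g0) * |t| ≤ Mc ^ 2 / (2 * g0) * (c / (Mc ^ 2 / (2 * g0) + 1)) :=
        mul_le_mul_of_nonneg_left (le_of_lt ht) hK
      refine h4.trans ?_
      have h5 : Mc ^ 2 / (2 * g0) * (c / (Mc ^ 2 / (2 * g0) + 1))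
          ≤ (Mc ^ 2 / (2 * g0) + 1) * (c / (Mc ^ 2 / (2 * g0) + 1)) :=
        mul_le_mul_of_nonneg_right (by linarith) (le_of_lt hpos)
      refine h5.trans (le_of_eq ?_)
      field_simp
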